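/- Suppose there is a norm ‖·‖_d on traceless self-adjoint operators with d(ψ,φ) = ‖|ψ⟩⟨ψ|−|φ⟩⟨φ|‖_d for all pure states. Then for all density operators ρ, σ: W_1^d(ρ,σ) ≥ ‖ρ−σ‖_{DW_1^d} ≥ ‖ρ−σ‖_d, and when ρ and σ are pure all three quantities are equal to d. -/

import Mathlib

open scoped BigOperators ComplexOrder
open Matrix

noncomputable section

abbrev QV (D : ℕ) := EuclideanSpace ℂ (Fin D)

def qproj {D : ℕ} (ψ : QV D) : Matrix (Fin D) (Fin D) ℂ :=
  Matrix.of fun i j => ψ i * (starRingEnd ℂ) (ψ j)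

/-- A quantum transport plan between `ρ` and `σ`. -/
structure TPlan (D : ℕ) (ρ σ : Matrix (Fin D) (Fin D) ℂ) where
  n : ℕ
  q : Fin n → ℝ
  ψ : Fin n → QV D
  φ : Fin n → QV D
  q_pos : ∀ j, 0 < q j
  ψ_unit : ∀ j, ‖ψ j‖ = 1
  φ_unit : ∀ j, ‖φ j‖ = 1
  margL : ∑ j, (q j : ℂ) • qproj (ψ j) = ρ
  margR : ∑ j, (q j : ℂ) • qproj (φ j) = σ

/-- p-th order transport cost of a plan (before the 1/p root). -/
def Tcost {D : ℕ} (d : QV D → QV D → ℝ) (p : ℝ) {ρ σ : Matrix (Fin D) (Fin D) ℂ}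
    (Q : TPlan D ρ σ) : ℝ :=
  ∑ j, Q.q j * d (Q.ψ j) (Q.φ j) ^ p

/-- The order-p quantum Wasserstein distance. -/
def Wp {D : ℕ} (d : QV D → QV D → ℝ) (p : ℝ) (ρ σ : Matrix (Fin D) (Fin D) ℂ) : ℝ :=
  sInf { x | ∃ Q : TPlan D ρ σ, x = (Tcost d p Q) ^ (1/p) }

/-- The infinite-order quantum Wasserstein distance. -/
def Winf {D : ℕ} (d : QV D → QV D → ℝ) (ρ σ : Matrix (Fin D) (Fin D) ℂ) : ℝ :=
  sInf { x | ∃ Q : TPlan D ρ σ, x = ⨆ j, d (Q.ψ j) (Q.φ j) }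

def IsDensity {D : ℕ} (ρ : Matrix (Fin D) (Fin D) ℂ) : Prop :=
  ρ.PosSemidef ∧ ρ.trace = 1

/-- Hilbert–Schmidt (Frobenius) norm. -/
def frob {D : ℕ} (A : Matrix (Fin D) (Fin D) ℂ) : ℝ :=
  Real.sqrt (∑ i, ∑ j, ‖A i j‖ ^ 2)

/-- Action of a matrix on a vector of the Euclidean space. -/
def act {D : ℕ} (U : Matrix (Fin D) (Fin D) ℂ) (ψ : QV D) : QV D :=
  (EuclideanSpace.equiv (Fin D) ℂ).symm (U.mulVec (EuclideanSpace.equiv (Fin D) ℂ ψ))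

/-- Dual Lipschitz constant of an observable. -/
def Ld {D : ℕ} (d : QV D → QV D → ℝ) (O : Matrix (Fin D) (Fin D) ℂ) : ℝ :=
  sSup { x | ∃ ρ σ : Matrix (Fin D) (Fin D) ℂ, IsDensity ρ ∧ IsDensity σ ∧ ρ ≠ σ ∧
    x = ((O * (ρ - σ)).trace).re / Wp d 1 ρ σ }

/-- Double-dual norm. -/
def DWnorm {D : ℕ} (d : QV D → QV D → ℝ) (X : Matrix (Fin D) (Fin D) ℂ) : ℝ :=
  sSup { x | ∃ O : Matrix (Fin D) (Fin D) ℂ, O.IsHermitian ∧ O.trace = 0 ∧ Ld d O ≤ 1 ∧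
    x = ((O * X).trace).re }

/-- Trace (nuclear) norm. -/
def traceNorm {D : ℕ} (A : Matrix (Fin D) (Fin D) ℂ) : ℝ :=
  ((((Matrix.posSemidef_conjTranspose_mul_self A).1.eigenvectorUnitary : Matrix (Fin D) (Fin D) ℂ) *
    diagonal ((fun x : ℝ => (x : ℂ)) ∘ Real.sqrt ∘ (Matrix.posSemidef_conjTranspose_mul_self A).1.eigenvalues) *
    (star ((Matrix.posSemidef_conjTranspose_mul_self A).1.eigenvectorUnitary :
      Matrix (Fin D) (Fin D) ℂ)))).trace.re



namespace WDCaux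

variable {D : ℕ}

lemma real_smul_eq (r : ℝ) (X : Matrix (Fin D) (Fin D) ℂ) :
    r • X = (r : ℂ) • X := by
  ext i j
  simp [Matrix.smul_apply, Complex.real_smul]

lemma qproj_isHermitian (ψ : QV D) : (qproj ψ).IsHermitian := by
  ext i j
  simp [qproj, Matrix.conjTranspose_apply, mul_comm]

lemma norm_sq_sum (ψ : QV D) (h : ‖ψ‖ = 1) : ∑ i, Complex.normSq (ψ i) = 1 := by
  have h1 := EuclideanSpace.norm_eq ψ
  rw [h] at h1
  have hnn : 0 ≤ ∑ i, ‖ψ i‖ ^ 2 := Finset.sum_nonneg fun i _ => sq_nonneg _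
  have h2 : ∑ i, ‖ψ i‖ ^ 2 = 1 := by
    nlinarith [Real.sq_sqrt hnn]
  simpa [Complex.sq_norm] using h2

lemma qproj_trace (ψ : QV D) (h : ‖ψ‖ = 1) : (qproj ψ).trace = 1 := by
  have h1 := norm_sq_sum ψ h
  have h2 : (qproj ψ).trace = ∑ i, (Complex.normSq (ψ i) : ℂ) := by
    simp [Matrix.trace, Matrix.diag, qproj, Complex.mul_conj]
  rw [h2, ← Complex.ofReal_sum, h1, Complex.ofReal_one]

lemma qproj_posSemidef (ψ : QV D) : (qproj ψ).PosSemidef := by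
  refine Matrix.PosSemidef.of_dotProduct_mulVec_nonneg (qproj_isHermitian ψ) fun x => ?_
  set c : ℂ := ∑ i, (starRingEnd ℂ) (ψ i) * x i with hc
  have key : dotProduct (star x) ((qproj ψ).mulVec x) = star c * c := by
    simp only [dotProduct, Matrix.mulVec, qproj, Matrix.of_apply, Pi.star_apply, hc,
      star_sum, star_mul', RCLike.star_def, starRingEnd_self_apply, Finset.sum_mul,
      Finset.mul_sum]
    rw [Finset.sum_comm]
    refine Finset.sum_congr rfl fun i _ => Finset.sum_congr rfl fun j _ => by ring
  rw [key]
  exact star_mul_self_nonneg c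

lemma qproj_isDensity (ψ : QV D) (h : ‖ψ‖ = 1) : IsDensity (qproj ψ) :=
  ⟨qproj_posSemidef ψ, qproj_trace ψ h⟩

lemma density_decomp {ρ : Matrix (Fin D) (Fin D) ℂ} (h : IsDensity ρ) :
    ∃ (p : Fin D → ℝ) (u : Fin D → QV D), (∀ i, 0 ≤ p i) ∧ (∀ i, ‖u i‖ = 1) ∧
      (∑ i, p i = 1) ∧ ∑ i, (p i : ℂ) • qproj (u i) = ρ := by
  have hH : ρ.IsHermitian := h.1.1
  have hunit : ∀ i : Fin D, ‖(hH.eigenvectorBasis i : QV D)‖ = 1 :=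
    fun i => hH.eigenvectorBasis.orthonormal.1 i
  have hdec : ∑ i, (hH.eigenvalues i : ℂ) • qproj (hH.eigenvectorBasis i) = ρ := by
    conv_rhs => rw [hH.spectral_theorem, Unitary.conjStarAlgAut_apply]
    ext i j
    rw [Matrix.mul_apply]
    simp only [Matrix.sum_apply, Matrix.smul_apply, qproj, Matrix.of_apply,
      Matrix.mul_diagonal, Matrix.star_apply, Matrix.IsHermitian.eigenvectorUnitary_apply,
      Function.comp_apply, RCLike.star_def, smul_eq_mul]
    refine Finset.sum_congr rfl fun k _ => by rw [mul_assoc]; exact mul_left_comm _ _ _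
  have htr : ∑ i, hH.eigenvalues i = 1 := by
    have h1 : ρ.trace = ∑ i, (hH.eigenvalues i : ℂ) := by
      conv_lhs => rw [← hdec]
      rw [Matrix.trace_sum]
      refine Finset.sum_congr rfl fun i _ => ?_
      rw [Matrix.trace_smul, qproj_trace _ (hunit i), smul_eq_mul, mul_one]
    rw [h.2] at h1
    have := h1.symm
    rw [← Complex.ofReal_sum] at this
    exact_mod_cast this
  exact ⟨hH.eigenvalues, fun i => hH.eigenvectorBasis i, fun i => h.1.eigenvalues_nonneg i,
    hunit, htr, hdec⟩

lemma exists_plan {ρ σ : Matrix (Fin D) (Fin D) ℂ} (hρ : IsDensity ρ) (hσ : IsDensity σ) :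
    Nonempty (TPlan D ρ σ) := by
  classical
  obtain ⟨p, u, hp0, hu, hp1, hpu⟩ := density_decomp hρ
  obtain ⟨r, v, hr0, hv, hr1, hrv⟩ := density_decomp hσ
  set s : Finset (Fin D) := Finset.univ.filter (fun i => p i ≠ 0) with hs
  set t : Finset (Fin D) := Finset.univ.filter (fun i => r i ≠ 0) with ht
  have hps : ∑ i ∈ s, p i = 1 := by
    rw [hs, Finset.sum_filter_ne_zero, hp1]
  have hrt : ∑ j ∈ t, r j = 1 := by
    rw [ht, Finset.sum_filter_ne_zero, hr1]
  have hpus : ∑ i ∈ s, (p i : ℂ) • qproj (u i) = ρ := by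
    rw [hs]
    rw [Finset.sum_filter_of_ne (fun i _ hne => by
      intro hp; apply hne; rw [hp]; simp)]
    exact hpu
  have hrvt : ∑ j ∈ t, (r j : ℂ) • qproj (v j) = σ := by
    rw [ht]
    rw [Finset.sum_filter_of_ne (fun j _ hne => by
      intro hr; apply hne; rw [hr]; simp)]
    exact hrv
  let st : Finset (Fin D × Fin D) := s ×ˢ t
  let e : st ≃ Fin st.card := st.equivFin
  refine ⟨⟨st.card,
    fun k => p ((e.symm k : Fin D × Fin D).1) * r ((e.symm k : Fin D × Fin D).2),
    fun k => u ((e.symm k : Fin D × Fin D).1),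
    fun k => v ((e.symm k : Fin D × Fin D).2),
    ?_, fun k => hu _, fun k => hv _, ?_, ?_⟩⟩
  · intro k
    have hmem : (↑(e.symm k) : Fin D × Fin D) ∈ s ×ˢ t := (e.symm k).2
    rw [Finset.mem_product] at hmem
    have h1 : p ((e.symm k : Fin D × Fin D).1) ≠ 0 := by
      have := hmem.1; rw [hs, Finset.mem_filter] at this; exact this.2
    have h2 : r ((e.symm k : Fin D × Fin D).2) ≠ 0 := by
      have := hmem.2; rw [ht, Finset.mem_filter] at this; exact this.2
    exact mul_pos ((hp0 _).lt_of_ne (Ne.symm h1)) ((hr0 _).lt_of_ne (Ne.symm h2))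
  · rw [← hpus]
    have h1 : (∑ k : Fin st.card, ((p ((e.symm k : Fin D × Fin D).1) *
          r ((e.symm k : Fin D × Fin D).2) : ℝ) : ℂ) • qproj (u ((e.symm k : Fin D × Fin D).1)))
        = ∑ a ∈ st, ((p a.1 * r a.2 : ℝ) : ℂ) • qproj (u a.1) := by
      rw [← Finset.sum_coe_sort st (fun a => ((p a.1 * r a.2 : ℝ) : ℂ) • qproj (u a.1))]
      exact Fintype.sum_equiv e.symm _ _ (fun k => rfl)
    rw [h1, Finset.sum_product]
    refine Finset.sum_congr rfl fun i _ => ?_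
    dsimp only
    rw [← Finset.sum_smul]
    congr 1
    rw [← Complex.ofReal_sum, ← Finset.mul_sum, hrt, mul_one]
  · rw [← hrvt]
    have h1 : (∑ k : Fin st.card, ((p ((e.symm k : Fin D × Fin D).1) *
          r ((e.symm k : Fin D × Fin D).2) : ℝ) : ℂ) • qproj (v ((e.symm k : Fin D × Fin D).2)))
        = ∑ a ∈ st, ((p a.1 * r a.2 : ℝ) : ℂ) • qproj (v a.2) := by
      rw [← Finset.sum_coe_sort st (fun a => ((p a.1 * r a.2 : ℝ) : ℂ) • qproj (v a.2))]
      exact Fintype.sum_equiv e.symm _ _ (fun k => rfl)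
    rw [h1, Finset.sum_product, Finset.sum_comm]
    refine Finset.sum_congr rfl fun j _ => ?_
    dsimp only
    rw [← Finset.sum_smul]
    congr 1
    rw [← Complex.ofReal_sum]
    rw [show (∑ i ∈ s, p i * r j) = (∑ i ∈ s, p i) * r j from (Finset.sum_mul ..).symm]
    rw [hps, one_mul]

def Vsub (D : ℕ) : Submodule ℝ (Matrix (Fin D) (Fin D) ℂ) where
  carrier := {X | X.IsHermitian ∧ X.trace = 0}
  add_mem' := fun hX hY => ⟨hX.1.add hY.1, by rw [Matrix.trace_add, hX.2, hY.2, add_zero]⟩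
  zero_mem' := ⟨Matrix.isHermitian_zero, by simp⟩
  smul_mem' := fun c X hX => ⟨by
      show (c • X)ᴴ = c • X
      rw [Matrix.conjTranspose_smul, star_trivial, hX.1],
    by rw [Matrix.trace_smul, hX.2, smul_zero]⟩

lemma mem_Vsub {X : Matrix (Fin D) (Fin D) ℂ} (h1 : X.IsHermitian) (h2 : X.trace = 0) :
    X ∈ Vsub D := ⟨h1, h2⟩

lemma Vsub_prop (X : Vsub D) : (X : Matrix (Fin D) (Fin D) ℂ).IsHermitian ∧
    (X : Matrix (Fin D) (Fin D) ℂ).trace = 0 := X.2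

def trf (O : Matrix (Fin D) (Fin D) ℂ) : Vsub D →ₗ[ℝ] ℝ where
  toFun X := ((O * (X : Matrix (Fin D) (Fin D) ℂ)).trace).re
  map_add' := by
    intro X Y
    simp [Matrix.mul_add, Matrix.trace_add]
  map_smul' := by
    intro r X
    simp only [Submodule.coe_smul, Matrix.mul_smul, Matrix.trace_smul, RingHom.id_apply,
      smul_eq_mul]
    rw [Complex.real_smul, Complex.re_ofReal_mul]

def pairing (D : ℕ) : Vsub D →ₗ[ℝ] Module.Dual ℝ (Vsub D) where
  toFun O := trf (O : Matrix (Fin D) (Fin D) ℂ)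
  map_add' := by
    intro O₁ O₂
    ext X
    simp [trf, Matrix.add_mul, Matrix.trace_add]
  map_smul' := by
    intro r O
    ext X
    simp [trf]

lemma herm_self_trace {A : Matrix (Fin D) (Fin D) ℂ} (hA : A.IsHermitian) :
    ((A * A).trace).re = ∑ i, ∑ j, Complex.normSq (A i j) := by
  have h : (A * A).trace = ∑ i, ∑ j, (Complex.normSq (A i j) : ℂ) := by
    rw [Matrix.trace]
    refine Finset.sum_congr rfl fun i _ => ?_
    rw [Matrix.diag_apply, Matrix.mul_apply]
    refine Finset.sum_congr rfl fun j _ => ?_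
    have hji : A j i = star (A i j) := by
      conv_lhs => rw [← hA]
      rw [Matrix.conjTranspose_apply]
    rw [hji, RCLike.star_def, Complex.mul_conj]
  rw [h]
  simp

lemma pairing_injective : Function.Injective (pairing D) := by
  rw [injective_iff_map_eq_zero]
  intro O hO
  have h1 : trf (O : Matrix (Fin D) (Fin D) ℂ) O = 0 := by
    rw [show trf (O : Matrix (Fin D) (Fin D) ℂ) = (0 : Module.Dual ℝ (Vsub D)) from hO]
    rfl
  have h2 : ((( O : Matrix (Fin D) (Fin D) ℂ) * (O : Matrix (Fin D) (Fin D) ℂ)).trace).re = 0 := h1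
  rw [herm_self_trace (Vsub_prop O).1] at h2
  have h3 : ∀ i ∈ (Finset.univ : Finset (Fin D)), ∀ j ∈ (Finset.univ : Finset (Fin D)),
      Complex.normSq ((O : Matrix (Fin D) (Fin D) ℂ) i j) = 0 := by
    have := (Finset.sum_eq_zero_iff_of_nonneg (fun i _ =>
      Finset.sum_nonneg fun j _ => Complex.normSq_nonneg _)).mp h2
    intro i hi j hj
    exact (Finset.sum_eq_zero_iff_of_nonneg fun j _ => Complex.normSq_nonneg _).mp
      (this i hi) j hj
  have h4 : (O : Matrix (Fin D) (Fin D) ℂ) = 0 := by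
    ext i j
    exact Complex.normSq_eq_zero.mp (h3 i (Finset.mem_univ i) j (Finset.mem_univ j))
  exact Subtype.ext h4

lemma pairing_surjective : Function.Surjective (pairing D) :=
  (LinearMap.injective_iff_surjective_of_finrank_eq_finrank
    (Subspace.dual_finrank_eq).symm).mp pairing_injective

def VT (D : ℕ) := ↥(Vsub D)

def VT.mk {D : ℕ} (M : Matrix (Fin D) (Fin D) ℂ) (h : M ∈ Vsub D) : VT D :=
  (⟨M, h⟩ : ↥(Vsub D))

def VT.mat {D : ℕ} (X : VT D) : Matrix (Fin D) (Fin D) ℂ := Subtype.val X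

instance : AddCommGroup (VT D) := inferInstanceAs (AddCommGroup ↥(Vsub D))

instance : Module ℝ (VT D) := inferInstanceAs (Module ℝ ↥(Vsub D))

instance : FiniteDimensional ℝ (VT D) :=
  inferInstanceAs (FiniteDimensional ℝ ↥(Vsub D))

lemma VT.mat_smul {D : ℕ} (r : ℝ) (X : VT D) : (r • X).mat = r • X.mat := rfl

lemma VT.prop {D : ℕ} (X : VT D) : X.mat.IsHermitian ∧ X.mat.trace = 0 :=
  Vsub_prop (D := D) X

def trfV (O : Matrix (Fin D) (Fin D) ℂ) : VT D →ₗ[ℝ] ℝ := trf O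

end WDCaux

/-- If `d` is induced by a norm `nd` on traceless self-adjoint operators, then
`W_1^d ≥ ‖·‖_{DW_1^d} ≥ ‖·‖_d`, with equality (to `d`) on pure states. -/
theorem wasserstein_dual_chain {D : ℕ} (d : QV D → QV D → ℝ)
    (hdnn : ∀ a b : QV D, 0 ≤ d a b)
    (hdcont : Continuous fun x : QV D × QV D => d x.1 x.2)
    (nd : Matrix (Fin D) (Fin D) ℂ → ℝ)
    (hnd_nonneg : ∀ X, 0 ≤ nd X)
    (hnd_tri : ∀ X Y, nd (X + Y) ≤ nd X + nd Y)
    (hnd_smul : ∀ (c : ℝ) (X), nd ((c : ℂ) • X) = |c| * nd X)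
    (hnd_pos : ∀ X : Matrix (Fin D) (Fin D) ℂ,
        X.IsHermitian → X.trace = 0 → X ≠ 0 → 0 < nd X)
    (hd_eq : ∀ ψ φ : QV D, ‖ψ‖ = 1 → ‖φ‖ = 1 → d ψ φ = nd (qproj ψ - qproj φ)) :
    (∀ ρ σ : Matrix (Fin D) (Fin D) ℂ, IsDensity ρ → IsDensity σ →
      nd (ρ - σ) ≤ DWnorm d (ρ - σ) ∧ DWnorm d (ρ - σ) ≤ Wp d 1 ρ σ) ∧
    (∀ ψ φ : QV D, ‖ψ‖ = 1 → ‖φ‖ = 1 →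
      Wp d 1 (qproj ψ) (qproj φ) = d ψ φ ∧
      DWnorm d (qproj ψ - qproj φ) = d ψ φ ∧
      nd (qproj ψ - qproj φ) = d ψ φ) := by
  classical
  have nd0 : nd 0 = 0 := by
    have := hnd_smul 0 0
    simpa using this
  have nd_sum_le : ∀ {n : ℕ} (f : Fin n → Matrix (Fin D) (Fin D) ℂ),
      nd (∑ i, f i) ≤ ∑ i, nd (f i) := by
    intro n f
    induction (Finset.univ : Finset (Fin n)) using Finset.cons_induction with
    | empty => simp [nd0]
    | cons a s ha ih =>
      rw [Finset.sum_cons, Finset.sum_cons]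
      exact le_trans (hnd_tri _ _) (by linarith)
  have tcost_ge : ∀ (ρ σ : Matrix (Fin D) (Fin D) ℂ) (Q : TPlan D ρ σ),
      nd (ρ - σ) ≤ Tcost d 1 Q := by
    intro ρ σ Q
    have h1 : ρ - σ = ∑ j, ((Q.q j : ℂ) • qproj (Q.ψ j) - (Q.q j : ℂ) • qproj (Q.φ j)) := by
      rw [Finset.sum_sub_distrib, Q.margL, Q.margR]
    rw [h1, Tcost]
    refine le_trans (nd_sum_le _) (le_of_eq (Finset.sum_congr rfl fun j _ => ?_))
    rw [Real.rpow_one, hd_eq _ _ (Q.ψ_unit j) (Q.φ_unit j), ← smul_sub, hnd_smul,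
      abs_of_pos (Q.q_pos j)]
  have hWp_nonneg : ∀ ρ σ : Matrix (Fin D) (Fin D) ℂ, 0 ≤ Wp d 1 ρ σ := by
    intro ρ σ
    apply Real.sInf_nonneg
    rintro x ⟨Q, rfl⟩
    rw [one_div_one, Real.rpow_one]
    exact Finset.sum_nonneg fun j _ =>
      mul_nonneg (Q.q_pos j).le (Real.rpow_nonneg (hdnn _ _) _)
  have hWp_ge : ∀ ρ σ, IsDensity ρ → IsDensity σ → nd (ρ - σ) ≤ Wp d 1 ρ σ := by
    intro ρ σ hρ hσ
    obtain ⟨Q0⟩ := WDCaux.exists_plan hρ hσ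
    refine le_csInf ⟨_, Q0, rfl⟩ ?_
    rintro x ⟨Q, rfl⟩
    rw [one_div_one, Real.rpow_one]
    exact tcost_ge ρ σ Q
  letI : NormedAddCommGroup (WDCaux.VT D) := AddGroupNorm.toNormedAddCommGroup
    { toFun := fun X => nd X.mat
      map_zero' := by exact nd0
      add_le' := fun X Y => hnd_tri _ _
      neg' := fun X => by
        have := hnd_smul (-1) X.mat
        simp at this
        exact this
      eq_zero_of_map_eq_zero' := fun X hX => by
        by_contra hne
        have hX0 : X.mat ≠ 0 := fun h => hne (Subtype.ext h)
        exact absurd hX (ne_of_gt (hnd_pos _ (WDCaux.VT.prop X).1 (WDCaux.VT.prop X).2 hX0)) }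
  letI : NormedSpace ℝ (WDCaux.VT D) :=
    { toModule := inferInstance
      norm_smul_le := fun r X => by
        have h1 : ‖r • X‖ = |r| * nd X.mat := by
          show nd (r • X).mat = _
          rw [WDCaux.VT.mat_smul, WDCaux.real_smul_eq, hnd_smul]
        rw [h1, Real.norm_eq_abs]
        show |r| * nd X.mat ≤ |r| * nd X.mat
        exact le_rfl }
  have hnormV : ∀ X : WDCaux.VT D, ‖X‖ = nd X.mat := fun _ => rfl
  have hbound : ∀ O : Matrix (Fin D) (Fin D) ℂ, ∃ C : ℝ, 0 ≤ C ∧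
      ∀ X : WDCaux.VT D, |((O * X.mat).trace).re| ≤ C * nd X.mat := by
    intro O
    let f : WDCaux.VT D →L[ℝ] ℝ :=
      ⟨WDCaux.trfV O, (WDCaux.trfV O).continuous_of_finiteDimensional⟩
    refine ⟨‖f‖, norm_nonneg f, fun X => ?_⟩
    have h1 := f.le_opNorm X
    have h2 : f X = ((O * X.mat).trace).re := rfl
    rw [hnormV, Real.norm_eq_abs, h2] at h1
    exact h1
  have hkey : ∀ O : Matrix (Fin D) (Fin D) ℂ, Ld d O ≤ 1 →
      ∀ ρ σ, IsDensity ρ → IsDensity σ → ((O * (ρ - σ)).trace).re ≤ Wp d 1 ρ σ := by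
    intro O hO ρ σ hρ hσ
    by_cases hne : ρ = σ
    · subst hne
      simp only [sub_self, Matrix.mul_zero, Matrix.trace_zero, Complex.zero_re]
      exact hWp_nonneg ρ ρ
    · have hherm : (ρ - σ).IsHermitian := hρ.1.1.sub hσ.1.1
      have htr0 : (ρ - σ).trace = 0 := by rw [Matrix.trace_sub, hρ.2, hσ.2, sub_self]
      have hndpos : 0 < nd (ρ - σ) := hnd_pos _ hherm htr0 (sub_ne_zero.mpr hne)
      have hWpos : 0 < Wp d 1 ρ σ := lt_of_lt_of_le hndpos (hWp_ge ρ σ hρ hσ)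
      obtain ⟨C, hC0, hC⟩ := hbound O
      have hbdd : BddAbove {x | ∃ ρ' σ' : Matrix (Fin D) (Fin D) ℂ,
          IsDensity ρ' ∧ IsDensity σ' ∧ ρ' ≠ σ' ∧
          x = ((O * (ρ' - σ')).trace).re / Wp d 1 ρ' σ'} := by
        refine ⟨C, ?_⟩
        rintro x ⟨ρ', σ', hρ', hσ', hne', rfl⟩
        have hherm' : (ρ' - σ').IsHermitian := hρ'.1.1.sub hσ'.1.1
        have htr0' : (ρ' - σ').trace = 0 := by rw [Matrix.trace_sub, hρ'.2, hσ'.2, sub_self]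
        have hnd' : 0 < nd (ρ' - σ') := hnd_pos _ hherm' htr0' (sub_ne_zero.mpr hne')
        have hW' : 0 < Wp d 1 ρ' σ' := lt_of_lt_of_le hnd' (hWp_ge ρ' σ' hρ' hσ')
        rw [div_le_iff₀ hW']
        calc ((O * (ρ' - σ')).trace).re
            ≤ C * nd (ρ' - σ') := le_trans (le_abs_self _)
              (hC (WDCaux.VT.mk _ (WDCaux.mem_Vsub hherm' htr0')))
          _ ≤ C * Wp d 1 ρ' σ' := mul_le_mul_of_nonneg_left (hWp_ge ρ' σ' hρ' hσ') hC0
      have hle : ((O * (ρ - σ)).trace).re / Wp d 1 ρ σ ≤ Ld d O :=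
        le_csSup hbdd ⟨ρ, σ, hρ, hσ, hne, rfl⟩
      have h2 := le_trans hle hO
      rwa [div_le_one hWpos] at h2
  have hDW_le : ∀ ρ σ, IsDensity ρ → IsDensity σ → DWnorm d (ρ - σ) ≤ Wp d 1 ρ σ := by
    intro ρ σ hρ hσ
    refine Real.sSup_le ?_ (hWp_nonneg ρ σ)
    rintro x ⟨O, hOh, hOt, hOL, rfl⟩
    exact hkey O hOL ρ σ hρ hσ
  have hnd_le : ∀ ρ σ, IsDensity ρ → IsDensity σ → nd (ρ - σ) ≤ DWnorm d (ρ - σ) := by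
    intro ρ σ hρ hσ
    have hherm : (ρ - σ).IsHermitian := hρ.1.1.sub hσ.1.1
    have htr0 : (ρ - σ).trace = 0 := by rw [Matrix.trace_sub, hρ.2, hσ.2, sub_self]
    set X₀ : WDCaux.VT D := WDCaux.VT.mk (ρ - σ) (WDCaux.mem_Vsub hherm htr0) with hX₀
    obtain ⟨g, hg1, hgx⟩ := exists_dual_vector'' ℝ X₀
    obtain ⟨O₀, hO₀⟩ := WDCaux.pairing_surjective
      ((g.toLinearMap : WDCaux.VT D →ₗ[ℝ] ℝ) : Module.Dual ℝ ↥(WDCaux.Vsub D))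
    have hrep : ∀ X : WDCaux.VT D,
        (((O₀ : Matrix (Fin D) (Fin D) ℂ) * X.mat).trace).re = g X :=
      fun X => DFunLike.congr_fun hO₀ X
    have hgle : ∀ X : WDCaux.VT D, g X ≤ nd X.mat := fun X => by
      calc g X ≤ |g X| := le_abs_self _
        _ = ‖g X‖ := (Real.norm_eq_abs _).symm
        _ ≤ ‖g‖ * ‖X‖ := g.le_opNorm X
        _ ≤ 1 * ‖X‖ := mul_le_mul_of_nonneg_right hg1 (norm_nonneg X)
        _ = nd X.mat := by rw [one_mul, hnormV]
    have hLd : Ld d (O₀ : Matrix (Fin D) (Fin D) ℂ) ≤ 1 := by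
      refine Real.sSup_le ?_ zero_le_one
      rintro x ⟨ρ', σ', hρ', hσ', hne', rfl⟩
      have hherm' : (ρ' - σ').IsHermitian := hρ'.1.1.sub hσ'.1.1
      have htr0' : (ρ' - σ').trace = 0 := by rw [Matrix.trace_sub, hρ'.2, hσ'.2, sub_self]
      have hnd' : 0 < nd (ρ' - σ') := hnd_pos _ hherm' htr0' (sub_ne_zero.mpr hne')
      have hW' : 0 < Wp d 1 ρ' σ' := lt_of_lt_of_le hnd' (hWp_ge ρ' σ' hρ' hσ')
      rw [div_le_one hW']
      calc (((O₀ : Matrix (Fin D) (Fin D) ℂ) * (ρ' - σ')).trace).re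
          = g (WDCaux.VT.mk (ρ' - σ') (WDCaux.mem_Vsub hherm' htr0')) :=
            hrep (WDCaux.VT.mk (ρ' - σ') (WDCaux.mem_Vsub hherm' htr0'))
        _ ≤ nd (ρ' - σ') := hgle _
        _ ≤ Wp d 1 ρ' σ' := hWp_ge ρ' σ' hρ' hσ'
    have hbdd : BddAbove {x | ∃ O : Matrix (Fin D) (Fin D) ℂ, O.IsHermitian ∧ O.trace = 0 ∧
        Ld d O ≤ 1 ∧ x = ((O * (ρ - σ)).trace).re} :=
      ⟨Wp d 1 ρ σ, by rintro x ⟨O, h1, h2, h3, rfl⟩; exact hkey O h3 ρ σ hρ hσ⟩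
    have hval : nd (ρ - σ) = (((O₀ : Matrix (Fin D) (Fin D) ℂ) * (ρ - σ)).trace).re := by
      have := (hrep X₀).trans (hgx.trans (hnormV X₀))
      exact this.symm
    exact le_csSup hbdd ⟨O₀, (WDCaux.Vsub_prop O₀).1, (WDCaux.Vsub_prop O₀).2, hLd, hval⟩
  refine ⟨fun ρ σ hρ hσ => ⟨hnd_le ρ σ hρ hσ, hDW_le ρ σ hρ hσ⟩, ?_⟩
  intro ψ φ hψ hφ
  have hρ := WDCaux.qproj_isDensity ψ hψ
  have hσ := WDCaux.qproj_isDensity φ hφ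
  have h3 : nd (qproj ψ - qproj φ) = d ψ φ := (hd_eq ψ φ hψ hφ).symm
  have hWle : Wp d 1 (qproj ψ) (qproj φ) ≤ d ψ φ := by
    let Q : TPlan D (qproj ψ) (qproj φ) :=
      { n := 1, q := fun _ => 1, ψ := fun _ => ψ, φ := fun _ => φ,
        q_pos := fun _ => one_pos, ψ_unit := fun _ => hψ, φ_unit := fun _ => hφ,
        margL := by simp, margR := by simp }
    have hx : Tcost d 1 Q ^ ((1:ℝ)/(1:ℝ)) = d ψ φ := by
      rw [one_div_one, Real.rpow_one]
      show (∑ _j : Fin 1, (1:ℝ) * d ψ φ ^ (1:ℝ)) = d ψ φ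
      simp [Real.rpow_one]
    have hbb : BddBelow {x | ∃ Q' : TPlan D (qproj ψ) (qproj φ),
        x = Tcost d 1 Q' ^ ((1:ℝ)/(1:ℝ))} := by
      refine ⟨0, ?_⟩
      rintro x ⟨Q', rfl⟩
      rw [one_div_one, Real.rpow_one]
      exact Finset.sum_nonneg fun j _ =>
        mul_nonneg (Q'.q_pos j).le (Real.rpow_nonneg (hdnn _ _) _)
    have h5 : sInf {x | ∃ Q' : TPlan D (qproj ψ) (qproj φ),
        x = Tcost d 1 Q' ^ ((1:ℝ)/(1:ℝ))} ≤ d ψ φ := csInf_le hbb ⟨Q, hx.symm⟩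
    exact h5
  have hWge : d ψ φ ≤ Wp d 1 (qproj ψ) (qproj φ) := by
    rw [← h3]
    exact hWp_ge _ _ hρ hσ
  have hW : Wp d 1 (qproj ψ) (qproj φ) = d ψ φ := le_antisymm hWle hWge
  refine ⟨hW, le_antisymm (le_trans (hDW_le _ _ hρ hσ) hW.le) ?_, h3⟩
  rw [← h3]
  exact hnd_le _ _ hρ hσ
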